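/- Let n be a natural number and h : ℕ × ℕ → ℕ be supported on {0,...,n}² with h(p,q)=h(q,p) and h(p,q)=0 for p+q odd. Suppose the identity ∑_{k=0}^n (∑_{p+q=2k} h(p,q))·(2k-n)² = ∑_{p=0}^n (∑_q h(p,q))·(2p-n)² holds. Then h(p,q) = 0 for all p ≠ q. -/

import Mathlib

open Finset

theorem stmt10 (n : ℕ) (h : ℕ × ℕ → ℕ)
    (hsupp : ∀ p q, (n < p ∨ n < q) → h (p, q) = 0)
    (hsym : ∀ p q, h (p, q) = h (q, p))
    (hodd : ∀ p q, Odd (p + q) → h (p, q) = 0)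
    (heq : (∑ k ∈ range (n + 1),
        (∑ p ∈ range (n + 1), ∑ q ∈ range (n + 1),
          if p + q = 2 * k then (h (p, q) : ℤ) else 0) * ((2 * k : ℤ) - n) ^ 2) =
      ∑ p ∈ range (n + 1),
        (∑ q ∈ range (n + 1), (h (p, q) : ℤ)) * ((2 * p : ℤ) - n) ^ 2) :
    ∀ p q, p ≠ q → h (p, q) = 0 := by
  have key : ∀ p ∈ range (n + 1), ∀ q ∈ range (n + 1),
      (∑ k ∈ range (n + 1), (if p + q = 2 * k then (h (p, q) : ℤ) else 0) *
        ((2 * k : ℤ) - n) ^ 2)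
      = (h (p, q) : ℤ) * (((p : ℤ) + q) - n) ^ 2 := by
    intro p hp q hq
    simp only [mem_range] at hp hq
    by_cases hpar : Odd (p + q)
    · have h0 := hodd p q hpar
      have : ∀ k, p + q ≠ 2 * k := by
        intro k hk
        exact (Nat.not_odd_iff_even.mpr ⟨k, by omega⟩) hpar
      simp [h0]
    · obtain ⟨m, hm⟩ := Nat.not_odd_iff_even.mp hpar
      have hm' : p + q = 2 * m := by omega
      have hmn : m ∈ range (n + 1) := by simp; omega
      rw [Finset.sum_eq_single_of_mem m hmn]
      · rw [if_pos hm']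
        have : ((p : ℤ) + q) = 2 * m := by exact_mod_cast hm'
        rw [this]
      · intro b _ hb
        rw [if_neg (by omega), zero_mul]
  have hL : (∑ k ∈ range (n + 1),
        (∑ p ∈ range (n + 1), ∑ q ∈ range (n + 1),
          if p + q = 2 * k then (h (p, q) : ℤ) else 0) * ((2 * k : ℤ) - n) ^ 2)
      = ∑ p ∈ range (n + 1), ∑ q ∈ range (n + 1),
          (h (p, q) : ℤ) * (((p : ℤ) + q) - n) ^ 2 := by
    simp_rw [Finset.sum_mul]
    rw [Finset.sum_comm]
    refine Finset.sum_congr rfl fun p hp => ?_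
    rw [Finset.sum_comm]
    exact Finset.sum_congr rfl fun q hq => key p hp q hq
  have hR : (∑ p ∈ range (n + 1),
        (∑ q ∈ range (n + 1), (h (p, q) : ℤ)) * ((2 * p : ℤ) - n) ^ 2)
      = ∑ p ∈ range (n + 1), ∑ q ∈ range (n + 1),
          (h (p, q) : ℤ) * ((2 * p : ℤ) - n) ^ 2 := by
    simp_rw [Finset.sum_mul]
  have hRsym : (∑ p ∈ range (n + 1), ∑ q ∈ range (n + 1),
          (h (p, q) : ℤ) * ((2 * p : ℤ) - n) ^ 2)
      = ∑ p ∈ range (n + 1), ∑ q ∈ range (n + 1),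
          (h (p, q) : ℤ) * ((2 * q : ℤ) - n) ^ 2 := by
    rw [Finset.sum_comm]
    refine Finset.sum_congr rfl fun p _ => Finset.sum_congr rfl fun q _ => ?_
    rw [hsym p q]
  have heq' : ∑ p ∈ range (n + 1), ∑ q ∈ range (n + 1),
      (h (p, q) : ℤ) * (2 * ((p : ℤ) - q) ^ 2) = 0 := by
    have e1 := heq
    rw [hL, hR] at e1
    have expand : ∀ p q : ℕ,
        (h (p, q) : ℤ) * (2 * ((p : ℤ) - q) ^ 2)
        = (h (p, q) : ℤ) * ((2 * p : ℤ) - n) ^ 2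
          + (h (p, q) : ℤ) * ((2 * q : ℤ) - n) ^ 2
          - 2 * ((h (p, q) : ℤ) * (((p : ℤ) + q) - n) ^ 2) := by
      intro p q; ring
    simp_rw [expand, Finset.sum_sub_distrib, Finset.sum_add_distrib,
      ← Finset.mul_sum]
    rw [← hRsym, ← e1]
    ring
  have hzero : ∀ p ∈ range (n + 1), ∀ q ∈ range (n + 1),
      (h (p, q) : ℤ) * (2 * ((p : ℤ) - q) ^ 2) = 0 := by
    have h1 := (Finset.sum_eq_zero_iff_of_nonneg (fun p _ =>
      Finset.sum_nonneg fun q _ => by positivity)).mp heq'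
    intro p hp q hq
    exact (Finset.sum_eq_zero_iff_of_nonneg (fun q _ => by positivity)).mp
      (h1 p hp) q hq
  intro p q hpq
  by_cases hp : n < p
  · exact hsupp p q (Or.inl hp)
  by_cases hq : n < q
  · exact hsupp p q (Or.inr hq)
  have hz := hzero p (by simp; omega) q (by simp; omega)
  have hne : ((p : ℤ) - q) ≠ 0 := by
    intro hc
    exact hpq (by exact_mod_cast sub_eq_zero.mp hc)
  have : (h (p, q) : ℤ) = 0 := by
    rcases mul_eq_zero.mp hz with h0 | h0
    · exact h0
    · exfalso; have := pow_ne_zero 2 hne; simp at h0; omega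
  exact_mod_cast this
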